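/- Let q be a prime power, n = 1 + q^{a₁} + ... + q^{a_{q+t}} with −1 ≤ t ≤ q−4 and a₁,...,a_{q+t} ≥ 0. Then g_{n,q} = − Σ_{1 ≤ i₁ < ... < i_{t+2} ≤ q+t} S_{a_{i₁}} ··· S_{a_{i_{t+2}}}. -/

import Mathlib

open Polynomial Finset


lemma lucas_dvd (p : ℕ) (hp : p.Prime) :
    ∀ e r m : ℕ, r < m → m < p ^ e → p ∣ (p ^ e + r).choose m := by
  intro e
  induction e with
  | zero => intro r m h1 h2; simp at h2; omega
  | succ e ih =>
    intro r m hrm hm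
    haveI : Fact p.Prime := ⟨hp⟩
    have hp1 : 1 < p := hp.one_lt
    have hmod := Choose.choose_modEq_choose_mod_mul_choose_div_nat
      (n := p ^ (e+1) + r) (k := m) (p := p)
    have hmodp : (p ^ (e+1) + r) % p = r % p := by
      conv_lhs => rw [pow_succ', Nat.mul_add_mod]
    have hdiv : (p ^ (e+1) + r) / p = p ^ e + r / p := by
      rw [pow_succ', Nat.mul_add_div (by omega)]
    rw [hmodp, hdiv] at hmod
    by_cases hcase : r % p < m % p
    · have h0 : (r % p).choose (m % p) = 0 := Nat.choose_eq_zero_of_lt hcase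
      have hdvd : p ∣ (r % p).choose (m % p) * ((p ^ e + r / p).choose (m / p)) := by
        simp [h0]
      exact (Nat.modEq_zero_iff_dvd).mp (hmod.trans ((Nat.modEq_zero_iff_dvd).mpr hdvd))
    · push_neg at hcase
      have h1 := Nat.div_add_mod r p
      have h2 := Nat.div_add_mod m p
      have hrd : r / p < m / p := by
        have hle : r / p ≤ m / p := Nat.div_le_div_right hrm.le
        rcases eq_or_lt_of_le hle with heq | h
        · rw [heq] at h1; omega
        · exact h
      have hmd : m / p < p ^ e := by
        rw [Nat.div_lt_iff_lt_mul (by omega)]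
        calc m < p ^ (e+1) := hm
          _ = p ^ e * p := pow_succ p e
      have hdvd : p ∣ (r % p).choose (m % p) * ((p ^ e + r / p).choose (m / p)) :=
        Dvd.dvd.mul_left (ih (r / p) (m / p) hrd hmd) _
      exact (Nat.modEq_zero_iff_dvd).mp (hmod.trans ((Nat.modEq_zero_iff_dvd).mpr hdvd))


lemma sum_pow_field (F : Type*) [Field F] [Fintype F] (m : ℕ)
    (hm : m < 2 * (Fintype.card F - 1)) :
    ∑ c : F, c ^ m = if m = Fintype.card F - 1 then (-1 : F) else 0 := by
  classical
  have hq2 : 2 ≤ Fintype.card F := Fintype.one_lt_card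
  by_cases hm0 : m = 0
  · subst hm0
    rw [if_neg (by omega)]
    simp only [pow_zero, sum_const, card_univ, nsmul_eq_mul, mul_one]
    exact FiniteField.cast_card_eq_zero F
  · have key : ∑ c : F, c ^ m = ∑ c : Fˣ, ((c : F)) ^ m := by
      let φ : Fˣ ↪ F := ⟨fun x ↦ x, fun _ _ h => Units.ext h⟩
      have huniv : (univ : Finset Fˣ).map φ = univ \ {0} := by
        ext x
        simpa only [mem_map, mem_univ, Function.Embedding.coeFn_mk, true_and, mem_sdiff,
          mem_singleton, φ] using (show (∃ a : Fˣ, φ a = x) ↔ ¬ x = 0 from isUnit_iff_ne_zero)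
      calc ∑ c : F, c ^ m = ∑ c ∈ (univ : Finset F) \ {(0:F)}, c ^ m := by
            rw [← Finset.sum_sdiff (Finset.subset_univ {0}), Finset.sum_singleton,
              zero_pow hm0, add_zero]
        _ = ∑ c : Fˣ, ((c : F)) ^ m := by
            rw [← huniv, Finset.sum_map]; rfl
    rw [key, FiniteField.sum_pow_units]
    have hiff : Fintype.card F - 1 ∣ m ↔ m = Fintype.card F - 1 := by
      constructor
      · rintro ⟨c, rfl⟩
        rcases Nat.lt_or_ge c 2 with hc | hc
        · interval_cases c
          · simp at hm0
          · rw [mul_one]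
        · exfalso
          have h2 : 2 * (Fintype.card F - 1) ≤ (Fintype.card F - 1) * c := by
            rw [mul_comm]
            exact Nat.mul_le_mul_left _ hc
          omega
      · rintro rfl; exact dvd_rfl
    simp [hiff]

lemma count_supersets {α : Type*} [DecidableEq α] [Fintype α] (T : Finset α) (k : ℕ)
    (hT : T.card ≤ k) :
    ((powersetCard k (univ : Finset α)).filter fun s => T ⊆ s).card
      = (Fintype.card α - T.card).choose (k - T.card) := by
  have key : ((powersetCard k (univ : Finset α)).filter fun s => T ⊆ s).card
      = (powersetCard (k - T.card) Tᶜ).card := by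
    apply Finset.card_bij' (i := fun s _ => s \ T) (j := fun R _ => R ∪ T)
    · intro s hs
      simp only [mem_filter, mem_powersetCard] at hs
      obtain ⟨⟨hsub, hcard⟩, hTs⟩ := hs
      rw [mem_powersetCard]
      refine ⟨fun x hx => ?_, ?_⟩
      · simp only [mem_sdiff] at hx
        simp [Finset.mem_compl, hx.2]
      · rw [card_sdiff_of_subset hTs, hcard]
    · intro R hR
      rw [mem_powersetCard] at hR
      have hdisj : Disjoint R T := Finset.disjoint_left.mpr fun x hx => by
        have := hR.1 hx; simpa [Finset.mem_compl] using this
      simp only [mem_filter, mem_powersetCard]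
      refine ⟨⟨Finset.subset_univ _, ?_⟩, Finset.subset_union_right⟩
      rw [Finset.card_union_of_disjoint hdisj, hR.2]
      omega
    · intro s hs
      simp only [mem_filter] at hs
      exact Finset.sdiff_union_of_subset hs.2
    · intro R hR
      rw [mem_powersetCard] at hR
      have hdisj : Disjoint R T := Finset.disjoint_left.mpr fun x hx => by
        have := hR.1 hx; simpa [Finset.mem_compl] using this
      rw [Finset.union_sdiff_right, Finset.sdiff_eq_self_of_disjoint hdisj]
  rw [key, Finset.card_powersetCard, Finset.card_compl]

lemma sum_powerset_group {M ι : Type*} [AddCommMonoid M] [Fintype ι] [DecidableEq ι]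
    (f : Finset ι → M) :
    ∑ T ∈ (univ : Finset ι).powerset, f T
      = ∑ j ∈ range (Fintype.card ι + 1), ∑ T ∈ powersetCard j (univ : Finset ι), f T := by
  rw [eq_comm]
  calc ∑ j ∈ range (Fintype.card ι + 1), ∑ T ∈ powersetCard j (univ : Finset ι), f T
      = ∑ j ∈ range (Fintype.card ι + 1),
          ∑ T ∈ (univ : Finset ι).powerset.filter fun T => T.card = j, f T := by
        refine Finset.sum_congr rfl fun j _ => ?_
        rw [← powersetCard_eq_filter]
    _ = ∑ T ∈ (univ : Finset ι).powerset, f T := by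
        apply Finset.sum_fiberwise_of_maps_to
        intro T hT
        rw [mem_range, Nat.lt_succ_iff, ← card_univ]
        exact card_le_card (mem_powerset.mp hT)

set_option maxHeartbeats 1000000 in
lemma Sa_comp {F : Type*} [Field F] (p e : ℕ) [Fact p.Prime] [CharP F p] (q : ℕ)
    (hqe : q = p ^ e) (b : ℕ) :
    (∑ j ∈ range b, (X : F[X]) ^ q ^ j).comp (X ^ q - X) = X ^ q ^ b - X := by
  rw [Polynomial.sum_comp]
  have step : ∀ j, ((X:F[X]) ^ q ^ j).comp (X ^ q - X) = X ^ q ^ (j+1) - X ^ q ^ j := by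
    intro j
    rw [pow_comp, X_comp]
    have h1 : q ^ j = p ^ (e * j) := by rw [hqe, ← pow_mul]
    rw [h1, sub_pow_char_pow, ← h1]
    congr 1
    rw [← pow_mul, ← pow_succ']
  calc ∑ j ∈ range b, ((X:F[X]) ^ q ^ j).comp (X ^ q - X)
      = ∑ j ∈ range b, ((fun j => (X:F[X]) ^ q ^ j) (j+1) - (fun j => (X:F[X]) ^ q ^ j) j) := by
        exact Finset.sum_congr rfl fun j _ => step j
    _ = (fun j => (X:F[X]) ^ q ^ j) b - (fun j => (X:F[X]) ^ q ^ j) 0 :=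
        Finset.sum_range_sub (f := fun j => (X:F[X]) ^ q ^ j) b
    _ = X ^ q ^ b - X := by simp


/-- If `n = 1 + q^{a₁} + ⋯ + q^{a_{q+t}}` with `−1 ≤ t ≤ q−4`, then
`g_{n,q} = − ∑_{1 ≤ i₁ < ⋯ < i_{t+2} ≤ q+t} S_{a_{i₁}} ⋯ S_{a_{i_{t+2}}}`,
where `g_{n,q}` is defined by `∑_{c ∈ F_q}(X+c)^n = g_{n,q}(X^q − X)` and
`S_a = X + X^q + ⋯ + X^{q^{a−1}}`. -/
theorem stmt11 (F : Type*) [Field F] [Fintype F] (q : ℕ) (hq : Fintype.card F = q)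
    (t : ℤ) (ht1 : -1 ≤ t) (ht2 : t ≤ (q : ℤ) - 4)
    (N : ℕ) (hN : (N : ℤ) = (q : ℤ) + t)
    (k : ℕ) (hk : (k : ℤ) = t + 2)
    (a : Fin N → ℕ)
    (n : ℕ) (hn : n = 1 + ∑ i : Fin N, q ^ a i)
    (g : Polynomial F)
    (hg : ∑ c : F, (X + C c) ^ n = g.comp (X ^ q - X)) :
    g = - ∑ s ∈ Finset.powersetCard k (Finset.univ : Finset (Fin N)),
          ∏ i ∈ s, ∑ j ∈ Finset.range (a i), X ^ q ^ j := by
  classical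
  set p := ringChar F with hpdef
  haveI : CharP F p := ringChar.charP F
  obtain ⟨e, hp, hqe⟩ := FiniteField.card F p
  haveI : Fact p.Prime := ⟨hp⟩
  rw [hq] at hqe
  have hq3 : 3 ≤ q := by omega
  have hk1 : 1 ≤ k := by omega
  have hkq : k + 2 ≤ q := by omega
  have hNk : N + 2 = q + k := by omega
  have hqe' : q = p ^ (e : ℕ) := hqe
  set Rp : F[X] := - ∑ s ∈ Finset.powersetCard k (Finset.univ : Finset (Fin N)),
      ∏ i ∈ s, ∑ j ∈ Finset.range (a i), X ^ q ^ j with hRp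
  set E : ℕ → F[X] :=
    fun j => ∑ T ∈ powersetCard j (univ : Finset (Fin N)), ∏ i ∈ T, (X : F[X]) ^ q ^ a i with hE
  set w : ℕ → F[X] := fun j => if j = k - 1 then -X else if j = k then -1 else 0 with hw
  -- Frobenius facts
  have hfrob : ∀ (c : F) (i : Fin N), (X + C c) ^ q ^ a i = (X : F[X]) ^ q ^ a i + C c := by
    intro c i
    have h1 : q ^ a i = p ^ ((e : ℕ) * a i) := by rw [hqe', ← pow_mul]
    rw [h1, add_pow_char_pow, ← h1, ← C_pow]
    congr 1
    have h2 := FiniteField.pow_card_pow (a i) c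
    rw [hq] at h2
    rw [h2]
  -- side A : the character sum
  have hA : ∑ c : F, (X + C c) ^ n = ∑ j ∈ range (N + 1), E j * w j := by
    have hcard2 : ∀ T : Finset (Fin N), ((univ : Finset (Fin N)) \ T).card = N - T.card := by
      intro T; rw [Finset.card_sdiff_of_subset (subset_univ T), card_univ, Fintype.card_fin]
    calc ∑ c : F, (X + C c) ^ n
        = ∑ c : F, ∑ T ∈ (univ : Finset (Fin N)).powerset,
            (∏ i ∈ T, (X : F[X]) ^ q ^ a i) * ((X + C c) * C c ^ (N - T.card)) := by
          refine Finset.sum_congr rfl fun c _ => ?_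
          rw [hn, pow_add, pow_one, ← Finset.prod_pow_eq_pow_sum,
            Finset.prod_congr rfl (fun i _ => hfrob c i), Finset.prod_add, Finset.mul_sum]
          refine Finset.sum_congr rfl fun T _ => ?_
          rw [Finset.prod_const, hcard2]
          ring
      _ = ∑ T ∈ (univ : Finset (Fin N)).powerset,
            (∏ i ∈ T, (X : F[X]) ^ q ^ a i) *
              (X * C (∑ c : F, c ^ (N - T.card)) + C (∑ c : F, c ^ (N - T.card + 1))) := by
          rw [Finset.sum_comm]
          refine Finset.sum_congr rfl fun T _ => ?_
          rw [← Finset.mul_sum]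
          congr 1
          rw [map_sum, map_sum, Finset.mul_sum, ← Finset.sum_add_distrib]
          refine Finset.sum_congr rfl fun c _ => ?_
          rw [C_pow, C_pow]
          ring
      _ = ∑ T ∈ (univ : Finset (Fin N)).powerset,
            (∏ i ∈ T, (X : F[X]) ^ q ^ a i) * w T.card := by
          refine Finset.sum_congr rfl fun T hT => ?_
          congr 1
          have hTle : T.card ≤ N := by
            have h3 := card_le_card (mem_powerset.mp hT)
            simpa using h3
          rw [sum_pow_field F (N - T.card) (by rw [hq]; omega),
            sum_pow_field F (N - T.card + 1) (by rw [hq]; omega), hq]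
          simp only [hw]
          by_cases h1 : T.card = k - 1
          · rw [if_pos (by omega : N - T.card = q - 1),
              if_neg (by omega : ¬ (N - T.card + 1 = q - 1)), if_pos h1]
            simp
          · by_cases h2 : T.card = k
            · rw [if_neg (by omega : ¬ (N - T.card = q - 1)),
                if_pos (by omega : N - T.card + 1 = q - 1), if_neg h1, if_pos h2]
              simp
            · rw [if_neg (by omega : ¬ (N - T.card = q - 1)),
                if_neg (by omega : ¬ (N - T.card + 1 = q - 1)), if_neg h1, if_neg h2]
              simp
      _ = ∑ j ∈ range (N + 1), ∑ T ∈ powersetCard j (univ : Finset (Fin N)),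
            (∏ i ∈ T, (X : F[X]) ^ q ^ a i) * w T.card := by
          rw [sum_powerset_group (fun T => (∏ i ∈ T, (X : F[X]) ^ q ^ a i) * w T.card),
            Fintype.card_fin]
      _ = ∑ j ∈ range (N + 1), E j * w j := by
          refine Finset.sum_congr rfl fun j hj => ?_
          simp only [hE]
          rw [Finset.sum_mul]
          refine Finset.sum_congr rfl fun T hT => ?_
          rw [(mem_powersetCard.mp hT).2]
  -- side B : the candidate polynomial composed with X^q - X
  have hB : Rp.comp (X ^ q - X) = ∑ j ∈ range (N + 1), E j * w j := by
    rw [hRp, neg_comp, Polynomial.sum_comp]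
    have h1 : ∀ s ∈ powersetCard k (univ : Finset (Fin N)),
        (∏ i ∈ s, ∑ j ∈ range (a i), (X : F[X]) ^ q ^ j).comp (X ^ q - X)
          = ∑ T ∈ s.powerset, (∏ i ∈ T, (X : F[X]) ^ q ^ a i) * (-X) ^ (k - T.card) := by
      intro s hs
      obtain ⟨-, hscard⟩ := mem_powersetCard.mp hs
      rw [Polynomial.prod_comp]
      have hterm : ∀ i ∈ s, (∑ j ∈ range (a i), (X : F[X]) ^ q ^ j).comp (X ^ q - X)
          = (X : F[X]) ^ q ^ a i + (-X) := by
        intro i _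
        rw [Sa_comp p e q hqe' (a i)]
        ring
      rw [Finset.prod_congr rfl hterm, Finset.prod_add]
      refine Finset.sum_congr rfl fun T hT => ?_
      rw [Finset.prod_const, Finset.card_sdiff_of_subset (mem_powerset.mp hT), hscard]
    rw [Finset.sum_congr rfl h1]
    have hswap : ∀ (s : Finset (Fin N)) (T : Finset (Fin N)),
        s ∈ powersetCard k (univ : Finset (Fin N)) ∧ T ∈ s.powerset ↔
        s ∈ ((powersetCard k (univ : Finset (Fin N))).filter fun s' => T ⊆ s') ∧
          T ∈ (univ : Finset (Fin N)).powerset := by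
      intro s T
      simp only [mem_powerset, mem_filter]
      constructor
      · rintro ⟨hs1, hs2⟩; exact ⟨⟨hs1, hs2⟩, subset_univ T⟩
      · rintro ⟨⟨hs1, hs2⟩, -⟩; exact ⟨hs1, hs2⟩
    rw [Finset.sum_comm' hswap]
    have h2 : ∀ T ∈ (univ : Finset (Fin N)).powerset,
        (∑ _s ∈ (powersetCard k (univ : Finset (Fin N))).filter (fun s' => T ⊆ s'),
          (∏ i ∈ T, (X : F[X]) ^ q ^ a i) * (-X) ^ (k - T.card))
        = (∏ i ∈ T, (X : F[X]) ^ q ^ a i) *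
            (((if T.card ≤ k then (N - T.card).choose (k - T.card) else 0 : ℕ) : F[X]) *
              (-X) ^ (k - T.card)) := by
      intro T _
      rw [Finset.sum_const, nsmul_eq_mul]
      by_cases hTk : T.card ≤ k
      · rw [if_pos hTk, count_supersets T k hTk, Fintype.card_fin]
        ring
      · rw [if_neg hTk]
        have hemp : (powersetCard k (univ : Finset (Fin N))).filter (fun s' => T ⊆ s') = ∅ := by
          rw [Finset.filter_eq_empty_iff]
          intro s hs hTs
          have h3 := card_le_card hTs
          rw [(mem_powersetCard.mp hs).2] at h3
          omega
        rw [hemp]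
        simp
    rw [Finset.sum_congr rfl h2,
      sum_powerset_group (fun T => (∏ i ∈ T, (X : F[X]) ^ q ^ a i) *
        (((if T.card ≤ k then (N - T.card).choose (k - T.card) else 0 : ℕ) : F[X]) *
          (-X) ^ (k - T.card))), Fintype.card_fin, ← Finset.sum_neg_distrib]
    refine Finset.sum_congr rfl fun j hj => ?_
    rw [mem_range, Nat.lt_succ_iff] at hj
    have hcoef : -((((if j ≤ k then (N - j).choose (k - j) else 0 : ℕ)) : F[X]) *
        (-X) ^ (k - j)) = w j := by
      simp only [hw]
      by_cases h1 : j = k - 1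
      · rw [if_pos h1]
        rw [h1, if_pos (by omega : k - 1 ≤ k)]
        have hc1 : k - (k - 1) = 1 := by omega
        have hc : (N - (k - 1)).choose (k - (k - 1)) = q - 1 := by
          rw [hc1, Nat.choose_one_right]
          omega
        rw [hc, hc1]
        have hdvd : p ∣ q := by
          rw [hqe']
          exact dvd_pow_self p (by exact_mod_cast e.pos.ne')
        have h0 : ((q : ℕ) : F[X]) = 0 := (CharP.cast_eq_zero_iff F[X] p q).mpr hdvd
        have hcast : (((q - 1 : ℕ)) : F[X]) = -1 := by
          rw [Nat.cast_sub (show 1 ≤ q by omega), h0]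
          ring
        rw [hcast]
        ring
      · rw [if_neg h1]
        by_cases h2 : j = k
        · rw [if_pos h2, h2, if_pos le_rfl, Nat.sub_self]
          simp
        · rw [if_neg h2]
          by_cases h3 : j ≤ k
          · rw [if_pos h3]
            have hdvd : p ∣ (N - j).choose (k - j) := by
              have hNj : N - j = p ^ (e : ℕ) + (k - j - 2) := by
                rw [← hqe']; omega
              rw [hNj]
              exact lucas_dvd p hp (e : ℕ) (k - j - 2) (k - j) (by omega)
                (by rw [← hqe']; omega)
            rw [(CharP.cast_eq_zero_iff F[X] p _).mpr hdvd]
            ring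
          · rw [if_neg h3]
            simp
    have hTc : ∀ T ∈ powersetCard j (univ : Finset (Fin N)),
        (∏ i ∈ T, (X : F[X]) ^ q ^ a i) *
            (((if T.card ≤ k then (N - T.card).choose (k - T.card) else 0 : ℕ) : F[X]) *
              (-X) ^ (k - T.card))
        = (∏ i ∈ T, (X : F[X]) ^ q ^ a i) *
            (((if j ≤ k then (N - j).choose (k - j) else 0 : ℕ) : F[X]) * (-X) ^ (k - j)) := by
      intro T hT
      rw [(mem_powersetCard.mp hT).2]
    rw [Finset.sum_congr rfl hTc, ← Finset.sum_mul, ← hcoef]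
    simp only [hE]
    ring
  -- conclude by injectivity of composition
  have hcomp : g.comp (X ^ q - X) = Rp.comp (X ^ q - X) := by
    rw [← hg, hA]
    exact hB.symm
  have hsub : (g - Rp).comp (X ^ q - X) = 0 := by
    rw [sub_comp, hcomp, sub_self]
  rcases Polynomial.comp_eq_zero_iff.mp hsub with h | ⟨-, h⟩
  · exact sub_eq_zero.mp h
  · exfalso
    have hdeg : ((X : F[X]) ^ q - X).natDegree = q := by
      have hd := FiniteField.X_pow_card_pow_sub_X_natDegree_eq F (n := 1) (p := q)
        one_ne_zero (by omega)
      simpa using hd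
    rw [h, natDegree_C] at hdeg
    omega
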